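/- Let c = [c_1,...,c_m] ∈ Γ(X;γ). Then the number of elements of Γ(X;γ) covered by c equals the number of indices i ∈ {1,...,m} with c_i > b_i and c_i > c_{i-1} + 1 (c_0 := 0). In particular, c is the minimum element γ iff there is no such index, and c is join-irreducible iff there is exactly one. -/
import Mathlib


def IsTup (n m : ℕ) (c : Fin m → ℕ) : Prop :=
  StrictMono c ∧ ∀ i, 1 ≤ c i ∧ c i ≤ n

def Gamma (n m : ℕ) : Set (Fin m → ℕ) := {c | IsTup n m c}

def GammaF (n m : ℕ) (b : Fin m → ℕ) : Set (Fin m → ℕ) :=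
  {c | IsTup n m c ∧ b ≤ c}

/-- `prev c i` is `c (i-1)`, with the convention `c 0 = 0` (1-based indexing). -/
def prev {m : ℕ} (c : Fin m → ℕ) (i : Fin m) : ℕ :=
  if _ : i.1 = 0 then 0 else c ⟨i.1 - 1, Nat.lt_of_le_of_lt (Nat.sub_le _ _) i.2⟩

/-- the condition `c i > b i` and `c i > c (i-1) + 1`. -/
def Good {m : ℕ} (b c : Fin m → ℕ) (i : Fin m) : Prop :=
  b i < c i ∧ prev c i + 1 < c i

/-- `c` is join-irreducible in `Γ(X;γ)`: it covers exactly one element. -/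
def JoinIrr (n m : ℕ) (b : Fin m → ℕ) (c : ↥(GammaF n m b)) : Prop :=
  ∃! y : ↥(GammaF n m b), y ⋖ c

/-- the poset of join-irreducible elements of `Γ(X;γ)`. -/
def JP (n m : ℕ) (b : Fin m → ℕ) : Set ↥(GammaF n m b) := {c | JoinIrr n m b c}

/-- the map φ, computed at index `i` (0-based; 1-based index is `i+1`). -/
def phi (n m : ℕ) (c : Fin m → ℕ) (i : Fin m) : ℕ × ℕ :=
  (n - c i - (m - 1 - i.1), i.1)

namespace Stmt12Aux

variable {n m : ℕ} {b : Fin m → ℕ}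

/-- the element obtained by decreasing coordinate `i` by 1 -/
def dn (c : Fin m → ℕ) (i : Fin m) : Fin m → ℕ :=
  Function.update c i (c i - 1)

lemma dn_mem {c : Fin m → ℕ} (hc : c ∈ GammaF n m b)
    {i : Fin m} (hi : Good b c i) : dn c i ∈ GammaF n m b := by
  obtain ⟨⟨hmono, hbd⟩, hle⟩ := hc
  refine ⟨⟨?_, ?_⟩, ?_⟩
  · intro j k hjk
    rcases eq_or_ne k i with rfl | hk
    · have hjne : j ≠ k := ne_of_lt hjk
      have hjlt : j.1 < k.1 := hjk
      have hk0 : ¬ (k.1 = 0) := by omega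
      have hprev : prev c k = c ⟨k.1 - 1, by omega⟩ := by
        simp [prev, hk0]
      have hj : c j ≤ c ⟨k.1 - 1, by omega⟩ := hmono.monotone (by
        simp [Fin.le_def]; omega)
      have h2 := hi.2
      rw [hprev] at h2
      have hjk2 : c j ≤ c ⟨k.1 - 1, by omega⟩ := hj
      simp [dn, Function.update_apply, hjne]
      omega
    · rcases eq_or_ne j i with rfl | hj
      · have hlt : c j < c k := hmono hjk
        simp [dn, Function.update_apply, hk]
        omega
      · have hlt : c j < c k := hmono hjk
        simp only [dn, Function.update_apply, hj, hk, if_false]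
        exact hlt
  · intro j
    rcases eq_or_ne j i with rfl | hj
    · have h1 := (hbd j).2
      have h2 := hi.2
      simp only [dn, Function.update_self]
      omega
    · simp only [dn, Function.update_apply, hj, if_false]
      exact hbd j
  · intro j
    rcases eq_or_ne j i with rfl | hj
    · have h1 := hi.1
      simp only [dn, Function.update_self]
      omega
    · simp only [dn, Function.update_apply, hj, if_false]
      exact hle j

lemma dn_lt {c : Fin m → ℕ} (hc : c ∈ GammaF n m b)
    {i : Fin m} (hi : Good b c i) : dn c i < c := by
  have h1 : 1 ≤ c i := (hc.1.2 i).1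
  constructor
  · intro j
    rcases eq_or_ne j i with rfl | hj
    · simp only [dn, Function.update_self]; omega
    · simp only [dn, Function.update_apply, hj, if_false]; exact le_refl _
  · intro hcle
    have := hcle i
    simp only [dn, Function.update_self] at this
    omega

lemma dn_between {c : Fin m → ℕ} (hc : c ∈ GammaF n m b)
    {i : Fin m} (hi : Good b c i) {z : Fin m → ℕ}
    (h1 : dn c i ≤ z) (h2 : z ≤ c) : z = dn c i ∨ z = c := by
  have hzi := h1 i
  have hzi' := h2 i
  simp only [dn, Function.update_self] at hzi
  have hoff : ∀ j, j ≠ i → z j = c j := by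
    intro j hj
    have := h1 j
    simp only [dn, Function.update_apply, hj, if_false] at this
    exact le_antisymm (h2 j) this
  rcases eq_or_lt_of_le hzi' with heq | hlt
  · right; funext j
    rcases eq_or_ne j i with rfl | hj
    · exact heq
    · exact hoff j hj
  · left; funext j
    rcases eq_or_ne j i with rfl | hj
    · have hA : z j < c j := hlt
      have hB : c j - 1 ≤ z j := hzi
      simp only [dn, Function.update_self]
      omega
    · simp only [dn, Function.update_apply, hj, if_false]; exact hoff j hj

lemma dn_covby (c : ↥(GammaF n m b))
    {i : Fin m} (hi : Good b (c : Fin m → ℕ) i) :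
    (⟨dn (c : Fin m → ℕ) i, dn_mem c.2 hi⟩ : ↥(GammaF n m b)) ⋖ c := by
  constructor
  · exact Subtype.mk_lt_mk.mpr (dn_lt c.2 hi)
  · intro z hz hzc
    have h1 : dn (c : Fin m → ℕ) i ≤ (z : Fin m → ℕ) := le_of_lt hz
    have h2 : (z : Fin m → ℕ) ≤ (c : Fin m → ℕ) := le_of_lt hzc
    rcases dn_between c.2 hi h1 h2 with heq | heq
    · exact absurd (Subtype.ext heq).symm (ne_of_lt hz)
    · exact absurd (Subtype.ext heq) (ne_of_lt hzc)

lemma covby_eq_dn (c y : ↥(GammaF n m b)) (h : y ⋖ c) :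
    ∃ i, Good b (c : Fin m → ℕ) i ∧ (y : Fin m → ℕ) = dn (c : Fin m → ℕ) i := by
  classical
  have hlt : (y : Fin m → ℕ) < (c : Fin m → ℕ) := h.lt
  have hle : (y : Fin m → ℕ) ≤ (c : Fin m → ℕ) := hlt.le
  have hne : (y : Fin m → ℕ) ≠ (c : Fin m → ℕ) := hlt.ne
  have hex : ∃ k, ∃ hk : k < m, (y : Fin m → ℕ) ⟨k, hk⟩ < (c : Fin m → ℕ) ⟨k, hk⟩ := by
    by_contra hcon
    push_neg at hcon
    apply hne; funext j
    exact le_antisymm (hle j) (hcon j.1 j.2)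
  obtain ⟨hk0, hyc⟩ := Nat.find_spec hex
  set k0 := Nat.find hex with hk0def
  set i : Fin m := ⟨k0, hk0⟩ with hidef
  have hmin : ∀ j : Fin m, j.1 < k0 → (y : Fin m → ℕ) j = (c : Fin m → ℕ) j := by
    intro j hj
    have := Nat.find_min hex hj
    push_neg at this
    exact le_antisymm (hle j) (this j.2)
  have hyb := y.2.2
  have hy1 := y.2.1.2
  have hymono := y.2.1.1
  have hyci : (y : Fin m → ℕ) i < (c : Fin m → ℕ) i := hyc
  have hgood : Good b (c : Fin m → ℕ) i := by
    constructor
    · exact lt_of_le_of_lt (hyb i) hyci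
    · rcases Nat.eq_zero_or_pos k0 with hz | hpos
      · have hprev : prev (c : Fin m → ℕ) i = 0 := by
          simp [prev, hidef, hz]
        have h1 : 1 ≤ (y : Fin m → ℕ) i := (hy1 i).1
        rw [hprev]
        omega
      · have hk1 : k0 - 1 < m := by omega
        have hkne : ¬ (k0 = 0) := by omega
        have hprev : prev (c : Fin m → ℕ) i = (c : Fin m → ℕ) ⟨k0 - 1, hk1⟩ := by
          simp [prev, hidef, hkne]
        have heqp : (y : Fin m → ℕ) ⟨k0 - 1, hk1⟩ = (c : Fin m → ℕ) ⟨k0 - 1, hk1⟩ :=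
          hmin _ (by show k0 - 1 < k0; omega)
        have hstep : (y : Fin m → ℕ) ⟨k0 - 1, hk1⟩ < (y : Fin m → ℕ) i :=
          hymono (by rw [Fin.lt_def]; show k0 - 1 < k0; omega)
        rw [hprev]
        omega
  refine ⟨i, hgood, ?_⟩
  have hyd : (y : Fin m → ℕ) ≤ dn (c : Fin m → ℕ) i := by
    intro j
    rcases eq_or_ne j i with rfl | hj
    · have hA : (y : Fin m → ℕ) i < (c : Fin m → ℕ) i := hyci
      simp only [dn, Function.update_self]
      omega
    · simp only [dn, Function.update_apply, hj, if_false]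
      exact hle j
  by_contra hne2
  have hylt : y < (⟨dn (c : Fin m → ℕ) i, dn_mem c.2 hgood⟩ : ↥(GammaF n m b)) :=
    lt_of_le_of_ne (Subtype.mk_le_mk.mpr hyd) (fun hh => hne2 (congrArg Subtype.val hh))
  exact h.2 hylt (Subtype.mk_lt_mk.mpr (dn_lt c.2 hgood))

lemma existsUnique_iff_ncard {α : Type*} {p : α → Prop} :
    (∃! x, p x) ↔ {x | p x}.ncard = 1 := by
  rw [Set.ncard_eq_one]
  constructor
  · rintro ⟨a, ha, hu⟩
    exact ⟨a, Set.eq_singleton_iff_unique_mem.mpr ⟨ha, hu⟩⟩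
  · rintro ⟨a, ha⟩
    rw [Set.eq_singleton_iff_unique_mem] at ha
    exact ⟨a, ha.1, ha.2⟩

end Stmt12Aux

open Stmt12Aux in
theorem stmt12 (n m : ℕ) (hm : 1 ≤ m) (hmn : m ≤ n) (b : Fin m → ℕ)
    (hb : b ∈ Gamma n m) (c : ↥(GammaF n m b)) :
    {y : ↥(GammaF n m b) | y ⋖ c}.ncard =
      {i : Fin m | Good b (c : Fin m → ℕ) i}.ncard ∧
    ((c : Fin m → ℕ) = b ↔ ¬ ∃ i : Fin m, Good b (c : Fin m → ℕ) i) ∧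
    (JoinIrr n m b c ↔ ∃! i : Fin m, Good b (c : Fin m → ℕ) i) := by
  classical
  have key : {y : ↥(GammaF n m b) | y ⋖ c} =
      (fun i : Fin m => if h : Good b (c : Fin m → ℕ) i then
        (⟨dn (c : Fin m → ℕ) i, dn_mem c.2 h⟩ : ↥(GammaF n m b)) else c) ''
        {i : Fin m | Good b (c : Fin m → ℕ) i} := by
    ext y
    constructor
    · intro hy
      obtain ⟨i, hg, heq⟩ := covby_eq_dn c y hy
      refine ⟨i, hg, ?_⟩
      simp only [dif_pos hg]
      exact (Subtype.ext heq).symm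
    · rintro ⟨i, hg, rfl⟩
      refine Set.mem_setOf.mpr ?_
      have hg' : Good b (c : Fin m → ℕ) i := hg
      beta_reduce
      rw [dif_pos hg']
      exact dn_covby c hg'
  have hinj : Set.InjOn
      (fun i : Fin m => if h : Good b (c : Fin m → ℕ) i then
        (⟨dn (c : Fin m → ℕ) i, dn_mem c.2 h⟩ : ↥(GammaF n m b)) else c)
      {i : Fin m | Good b (c : Fin m → ℕ) i} := by
    intro i hi j hj heq
    have hi' : Good b (c : Fin m → ℕ) i := hi
    have hj' : Good b (c : Fin m → ℕ) j := hj
    beta_reduce at heq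
    rw [dif_pos hi', dif_pos hj', Subtype.mk_eq_mk] at heq
    by_contra hij
    have h1 := congrFun heq i
    have hc1 : 1 ≤ (c : Fin m → ℕ) i := (c.2.1.2 i).1
    simp only [dn, Function.update_self, Function.update_apply, hij, if_false] at h1
    omega
  have part1 : {y : ↥(GammaF n m b) | y ⋖ c}.ncard =
      {i : Fin m | Good b (c : Fin m → ℕ) i}.ncard := by
    rw [key, Set.ncard_image_of_injOn hinj]
  have hbc : b ≤ (c : Fin m → ℕ) := c.2.2
  have part2 : ((c : Fin m → ℕ) = b ↔ ¬ ∃ i : Fin m, Good b (c : Fin m → ℕ) i) := by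
    constructor
    · rintro hceq ⟨i, hi1, _⟩
      rw [hceq] at hi1
      exact lt_irrefl _ hi1
    · intro hno
      have key2 : ∀ k (hk : k < m), (c : Fin m → ℕ) ⟨k, hk⟩ = b ⟨k, hk⟩ := by
        intro k
        induction k using Nat.strong_induction_on with
        | _ k IH =>
          intro hk
          set i : Fin m := ⟨k, hk⟩ with hidef
          have hni : ¬ Good b (c : Fin m → ℕ) i := fun hg => hno ⟨i, hg⟩
          rcases eq_or_lt_of_le (hbc i) with heq | hlt
          · exact heq.symm
          · exfalso
            have h2 : ¬ (prev (c : Fin m → ℕ) i + 1 < (c : Fin m → ℕ) i) :=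
              fun h => hni ⟨hlt, h⟩
            rcases Nat.eq_zero_or_pos k with rfl | hkpos
            · have hprev : prev (c : Fin m → ℕ) i = 0 := by simp [prev, hidef]
              rw [hprev] at h2
              have h1 : 1 ≤ (c : Fin m → ℕ) i := (c.2.1.2 i).1
              have hbi : 1 ≤ b i := (hb.2 i).1
              have hx1 : b i < (c : Fin m → ℕ) i := hlt
              have hx2 : ¬ (0 + 1 < (c : Fin m → ℕ) i) := h2
              omega
            · have hk1 : k - 1 < m := by omega
              have hkne : ¬ (k = 0) := by omega
              have hprev : prev (c : Fin m → ℕ) i = (c : Fin m → ℕ) ⟨k - 1, hk1⟩ := by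
                simp [prev, hidef, hkne]
              rw [hprev] at h2
              have hIH : (c : Fin m → ℕ) ⟨k - 1, hk1⟩ = b ⟨k - 1, hk1⟩ :=
                IH (k - 1) (by omega) hk1
              have hbs : b ⟨k - 1, hk1⟩ < b i := hb.1 (by rw [Fin.lt_def]; show k - 1 < k; omega)
              have hx1 : b i < (c : Fin m → ℕ) i := hlt
              have hx2 : ¬ ((c : Fin m → ℕ) ⟨k - 1, hk1⟩ + 1 < (c : Fin m → ℕ) i) := h2
              omega
      funext j
      exact key2 j.1 j.2
  refine ⟨part1, part2, ?_⟩
  rw [JoinIrr, existsUnique_iff_ncard, existsUnique_iff_ncard]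
  rw [show {y : ↥(GammaF n m b) | y ⋖ c}.ncard =
      {i : Fin m | Good b (c : Fin m → ℕ) i}.ncard from part1]
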